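/- Let the increments be almost surely nonnegative, i.e., P{X ≥ 0} = 1, let β := P{X = 0} ∈ [0,1), and let a > 0. Then E[e^{a N(x)}] < ∞ for some x ≥ 0 if and only if E[e^{a N(x)}] < ∞ for every x ≥ 0, and this holds if and only if a < -log β (where -log β := ∞ when β = 0). -/

import Mathlib

open MeasureTheory ProbabilityTheory Filter Set
open scoped ENNReal Topology

noncomputable section

/-- Partial sums of the increment sequence: the zero-delayed random walk
`S_0 = 0`, `S_n = X_0 + ⋯ + X_{n-1}`. -/
def rwS {Ω : Type*} (X : ℕ → Ω → ℝ) (n : ℕ) (ω : Ω) : ℝ := ∑ i ∈ Finset.range n, X i ω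

/-- First passage time `τ(x) = inf {n ∈ ℕ₀ : S_n > x}` into `(x, ∞)`,
with value `⊤` if the walk never exceeds `x`. -/
def firstPassage {Ω : Type*} (X : ℕ → Ω → ℝ) (x : ℝ) (ω : Ω) : ℕ∞ :=
  ⨅ (n : ℕ) (_ : x < rwS X n ω), (n : ℕ∞)

/-- Number of visits `N(x) = #{n ∈ ℕ : S_n ≤ x}` of the walk (after time 0) to `(-∞, x]`. -/
def numVisits {Ω : Type*} (X : ℕ → Ω → ℝ) (x : ℝ) (ω : Ω) : ℕ∞ :=
  {n : ℕ | 1 ≤ n ∧ rwS X n ω ≤ x}.encard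

/-- Last exit time `ρ(x)` from `(-∞, x]`: it is `sup {n ∈ ℕ : S_n ≤ x}` if
`inf_{n ≥ 1} S_n ≤ x` (the infimum taken in the extended reals), and `0` otherwise. -/
def lastExit {Ω : Type*} (X : ℕ → Ω → ℝ) (x : ℝ) (ω : Ω) : ℕ∞ :=
  if (⨅ (n : ℕ) (_ : 1 ≤ n), (rwS X n ω : EReal)) ≤ (x : EReal) then
    ⨆ (n : ℕ) (_ : 1 ≤ n ∧ rwS X n ω ≤ x), (n : ℕ∞)
  else 0

/-- `e^{a n}` for `n : ℕ∞`, equal to `∞` when `n = ∞`. -/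
def eexp (a : ℝ) (n : ℕ∞) : ℝ≥0∞ :=
  if n = ⊤ then ⊤ else ENNReal.ofReal (Real.exp (a * n.toNat))

/-- Exponential moment `E[e^{a T}]` (with values in `[0,∞]`) of an `ℕ∞`-valued random time. -/
def expMoment {Ω : Type*} [MeasurableSpace Ω] (P : Measure Ω) (a : ℝ) (T : Ω → ℕ∞) : ℝ≥0∞ :=
  ∫⁻ ω, eexp a (T ω) ∂P

/-- Laplace transform `φ(t) = E e^{-tY}` with values in `[0,∞]`. -/
def laplace {Ω : Type*} [MeasurableSpace Ω] (P : Measure Ω) (Y : Ω → ℝ) (t : ℝ) : ℝ≥0∞ :=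
  ∫⁻ ω, ENNReal.ofReal (Real.exp (-t * Y ω)) ∂P

/-- `R := -log inf_{t ≥ 0} E e^{-tY}`. -/
def Rconst {Ω : Type*} [MeasurableSpace Ω] (P : Measure Ω) (Y : Ω → ℝ) : ℝ :=
  -Real.log (⨅ t ∈ Set.Ici (0:ℝ), laplace P Y t).toReal

/-- The law of `Y` under `P` is concentrated on the lattice `l·ℤ`. -/
def ConcOnLattice {Ω : Type*} [MeasurableSpace Ω] (P : Measure Ω) (Y : Ω → ℝ) (l : ℝ) : Prop :=
  P {ω | ∃ k : ℤ, Y ω = l * k} = 1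

/-- The law of `Y` under `P` is non-lattice: it is not concentrated on any lattice `l·ℤ`, `l > 0`. -/
def NonLattice {Ω : Type*} [MeasurableSpace Ω] (P : Measure Ω) (Y : Ω → ℝ) : Prop :=
  ¬ ∃ l > (0:ℝ), ConcOnLattice P Y l

/-- The law of `Y` under `P` is lattice with span `l`: it is concentrated on `l·ℤ` and `l` is
maximal with this property. -/
def LatticeSpan {Ω : Type*} [MeasurableSpace Ω] (P : Measure Ω) (Y : Ω → ℝ) (l : ℝ) : Prop :=
  0 < l ∧ ConcOnLattice P Y l ∧ ∀ l' > (0:ℝ), ConcOnLattice P Y l' → l' ≤ l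

/-- The mean `E_γ[S_τ] = E[S_τ e^{aτ} e^{-γ S_τ}]` of `S_τ` under the exponentially tilted
measure, computed in `[0,∞]` (here `τ = τ(0)`; on `{τ = ∞}` the integrand is read as `0`). -/
def tiltedMeanStau {Ω : Type*} [MeasurableSpace Ω] (P : Measure Ω) (X : ℕ → Ω → ℝ)
    (a γ : ℝ) : ℝ≥0∞ :=
  ∫⁻ ω, ENNReal.ofReal (rwS X (firstPassage X 0 ω).toNat ω *
    Real.exp (a * ((firstPassage X 0 ω).toNat : ℝ)) *
    Real.exp (-γ * rwS X (firstPassage X 0 ω).toNat ω)) ∂P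

set_option linter.unusedSectionVars false
set_option linter.unusedVariables false

section AuxLemmas
variable {Ω : Type*} [MeasurableSpace Ω] {P : Measure Ω} [IsProbabilityMeasure P]

lemma mem_of_le_encard {s : Set ℕ} (h1 : ∀ k ∈ s, 1 ≤ k)
    (hdc : ∀ k ∈ s, ∀ j, 1 ≤ j → j ≤ k → j ∈ s)
    {n : ℕ} (hn : 1 ≤ n) (h : (n : ℕ∞) ≤ s.encard) : n ∈ s := by
  by_contra hns
  have hsub : s ⊆ Set.Ico 1 n := by
    intro k hk
    refine ⟨h1 k hk, ?_⟩
    by_contra hkn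
    exact hns (hdc k hk n hn (le_of_not_gt hkn))
  have hcard : s.encard ≤ ((n - 1 : ℕ) : ℕ∞) := by
    calc s.encard ≤ (Set.Ico 1 n).encard := Set.encard_mono hsub
    _ = ((n - 1 : ℕ) : ℕ∞) := by
        rw [← Finset.coe_Ico, Set.encard_coe_eq_coe_finsetCard, Nat.card_Ico]
  have : (n : ℕ∞) ≤ ((n - 1 : ℕ) : ℕ∞) := h.trans hcard
  rw [Nat.cast_le] at this
  omega

lemma rwS_mono {X : ℕ → Ω → ℝ} {ω : Ω} (hX : ∀ i, 0 ≤ X i ω) :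
    Monotone (fun n => rwS X n ω) := fun k l hkl =>
  Finset.sum_le_sum_of_subset_of_nonneg (Finset.range_subset_range.2 hkl) (fun i _ _ => hX i)

lemma le_numVisits_iff {X : ℕ → Ω → ℝ} {ω : Ω} (hX : ∀ i, 0 ≤ X i ω)
    {x : ℝ} {n : ℕ} (hn : 1 ≤ n) :
    (n : ℕ∞) ≤ numVisits X x ω ↔ rwS X n ω ≤ x := by
  constructor
  · intro h
    exact (mem_of_le_encard (s := {n : ℕ | 1 ≤ n ∧ rwS X n ω ≤ x})
      (fun k hk => hk.1)
      (fun k hk j hj hjk => ⟨hj, le_trans (rwS_mono hX hjk) hk.2⟩) hn h).2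
  · intro h
    have hsub : (Set.Icc 1 n) ⊆ {n : ℕ | 1 ≤ n ∧ rwS X n ω ≤ x} := fun k hk =>
      ⟨hk.1, le_trans (rwS_mono hX hk.2) h⟩
    calc (n : ℕ∞) = (Set.Icc 1 n).encard := by
          rw [← Finset.coe_Icc, Set.encard_coe_eq_coe_finsetCard, Nat.card_Icc]
          norm_num
    _ ≤ _ := Set.encard_mono hsub

lemma eexp_numVisits {a : ℝ} (ha : 0 < a) (x : ℝ) {X : ℕ → Ω → ℝ} {ω : Ω}
    (hX : ∀ i, 0 ≤ X i ω) :
    eexp a (numVisits X x ω) =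
      1 + ∑' n : ℕ, ENNReal.ofReal (Real.exp (a * (n + 1)) - Real.exp (a * n)) *
        Set.indicator {ω' | rwS X (n + 1) ω' ≤ x} (fun _ => 1) ω := by
  have key : ∀ n : ℕ, ((n + 1 : ℕ) : ℕ∞) ≤ numVisits X x ω ↔ rwS X (n + 1) ω ≤ x :=
    fun n => le_numVisits_iff hX (Nat.succ_le_succ (Nat.zero_le n))
  rcases eq_top_or_lt_top (numVisits X x ω) with htop | hlt
  · rw [htop]
    have hind : ∀ n : ℕ, Set.indicator {ω' | rwS X (n + 1) ω' ≤ x} (fun _ => (1:ℝ≥0∞)) ω = 1 := by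
      intro n
      have : rwS X (n + 1) ω ≤ x := (key n).1 (by rw [htop]; exact le_top)
      simp [Set.indicator_of_mem, this]
    have : eexp a (⊤ : ℕ∞) = ⊤ := if_pos rfl
    rw [this]
    symm
    rw [eq_top_iff]
    have hsum : (∑' n : ℕ, ENNReal.ofReal (Real.exp (a * (n + 1)) - Real.exp (a * n)) *
        Set.indicator {ω' | rwS X (n + 1) ω' ≤ x} (fun _ => (1:ℝ≥0∞)) ω) = ⊤ := by
      rw [eq_top_iff]
      calc (⊤ : ℝ≥0∞) = ∑' n : ℕ, ENNReal.ofReal (Real.exp a - 1) :=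
            (ENNReal.tsum_const_eq_top_of_ne_zero (by
              simp only [ne_eq, ENNReal.ofReal_eq_zero, not_le, sub_pos]
              exact Real.one_lt_exp_iff.2 ha)).symm
      _ ≤ _ := by
          refine ENNReal.tsum_le_tsum (fun n => ?_)
          rw [hind n, mul_one]
          apply ENNReal.ofReal_le_ofReal
          have h1 : Real.exp (a * n) * (Real.exp a - 1) = Real.exp (a * (n+1)) - Real.exp (a * n) := by
            rw [mul_sub, ← Real.exp_add]; ring_nf
          rw [← h1]
          have h2 : (1:ℝ) ≤ Real.exp (a * n) := Real.one_le_exp (by positivity)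
          nlinarith [Real.exp_pos a, Real.one_lt_exp_iff.2 ha]
    rw [hsum]
    simp
  · obtain ⟨k, hk⟩ : ∃ k : ℕ, numVisits X x ω = (k : ℕ∞) := by
      lift numVisits X x ω to ℕ using hlt.ne with k hk
      exact ⟨k, rfl⟩
    rw [hk]
    have heexp : eexp a ((k : ℕ∞)) = ENNReal.ofReal (Real.exp (a * k)) := by
      unfold eexp
      rw [if_neg (by exact_mod_cast WithTop.coe_ne_top)]
      simp
    rw [heexp]
    have hindic : ∀ n : ℕ, Set.indicator {ω' | rwS X (n + 1) ω' ≤ x} (fun _ => (1:ℝ≥0∞)) ω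
        = if n < k then 1 else 0 := by
      intro n
      by_cases hnk : n < k
      · have : rwS X (n + 1) ω ≤ x := (key n).1 (by rw [hk]; exact_mod_cast hnk)
        rw [if_pos hnk, Set.indicator_of_mem (show ω ∈ {ω' | rwS X (n + 1) ω' ≤ x} from this)]
      · have : ¬ rwS X (n + 1) ω ≤ x := by
          intro hcon
          have := (key n).2 hcon
          rw [hk, Nat.cast_le] at this
          omega
        rw [if_neg hnk, Set.indicator_of_notMem (show ω ∉ {ω' | rwS X (n + 1) ω' ≤ x} from this)]
    have hts : (∑' n : ℕ, ENNReal.ofReal (Real.exp (a * (n + 1)) - Real.exp (a * n)) *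
        Set.indicator {ω' | rwS X (n + 1) ω' ≤ x} (fun _ => (1:ℝ≥0∞)) ω)
        = ∑ n ∈ Finset.range k, ENNReal.ofReal (Real.exp (a * (n + 1)) - Real.exp (a * n)) := by
      rw [tsum_eq_sum (s := Finset.range k) (fun n hn => by
        rw [hindic n, if_neg (by simpa using hn), mul_zero])]
      refine Finset.sum_congr rfl (fun n hn => ?_)
      rw [hindic n, if_pos (by simpa using hn), mul_one]
    rw [hts]
    have hsum : (∑ n ∈ Finset.range k, ENNReal.ofReal (Real.exp (a * (n + 1)) - Real.exp (a * n)))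
        = ENNReal.ofReal (Real.exp (a * k) - 1) := by
      rw [← ENNReal.ofReal_sum_of_nonneg (fun n _ => by
        have : a * n ≤ a * (n + 1) := by nlinarith [ha.le]
        linarith [Real.exp_le_exp.2 this])]
      congr 1
      have := Finset.sum_range_sub (f := fun n : ℕ => Real.exp (a * n)) k
      simp only [Nat.cast_add, Nat.cast_one] at this ⊢
      rw [this]
      simp
    rw [hsum, ← ENNReal.ofReal_one, ← ENNReal.ofReal_add (by norm_num)
      (by linarith [Real.one_le_exp (show (0:ℝ) ≤ a * k by positivity)])]
    congr 1
    ring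

lemma lintegral_indicator_one' {s : Set Ω} (hs : MeasurableSet s) :
    ∫⁻ ω, Set.indicator s (fun _ => (1:ℝ≥0∞)) ω ∂P = P s := by
  rw [lintegral_indicator hs]; simp

lemma rwS_measurable {X : ℕ → Ω → ℝ} (hmeas : ∀ i, Measurable (X i)) (n : ℕ) :
    Measurable (rwS X n) :=
  Finset.measurable_sum _ (fun i _ => hmeas i)

lemma expMoment_numVisits_eq {a : ℝ} (ha : 0 < a) (x : ℝ) {X : ℕ → Ω → ℝ}
    (hmeas : ∀ i, Measurable (X i)) (hae : ∀ᵐ ω ∂P, ∀ i, 0 ≤ X i ω) :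
    expMoment P a (numVisits X x) =
      1 + ∑' n : ℕ, ENNReal.ofReal (Real.exp (a * (n + 1)) - Real.exp (a * n)) *
        P {ω | rwS X (n + 1) ω ≤ x} := by
  have hset : ∀ n : ℕ, MeasurableSet {ω | rwS X (n + 1) ω ≤ x} :=
    fun n => measurableSet_le (rwS_measurable hmeas (n + 1)) measurable_const
  unfold expMoment
  rw [lintegral_congr_ae ((hae.mono fun ω hω => eexp_numVisits ha x hω))]
  rw [lintegral_add_left measurable_const]
  simp only [lintegral_const, measure_univ, mul_one]
  congr 1
  rw [lintegral_tsum (fun n => ((measurable_const.indicator (hset n)).const_mul _).aemeasurable)]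
  refine tsum_congr (fun n => ?_)
  rw [lintegral_const_mul _ (measurable_const.indicator (hset n)),
    lintegral_indicator_one' (hset n)]

lemma lintegral_exp_laplace {t : ℝ} {X : ℕ → Ω → ℝ} (hmeas : ∀ i, Measurable (X i))
    (hident : ∀ i, P.map (X i) = P.map (X 0)) (i : ℕ) :
    ∫⁻ ω, ENNReal.ofReal (Real.exp (-t * X i ω)) ∂P = laplace P (X 0) t := by
  unfold laplace
  have hg : Measurable (fun y : ℝ => ENNReal.ofReal (Real.exp (-t * y))) := by fun_prop
  rw [← lintegral_map hg (hmeas i), hident i, lintegral_map hg (hmeas 0)]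

lemma lintegral_exp_rwS {t : ℝ} {X : ℕ → Ω → ℝ} (hmeas : ∀ i, Measurable (X i))
    (hindep : iIndepFun X P)
    (hident : ∀ i, P.map (X i) = P.map (X 0)) (n : ℕ) :
    ∫⁻ ω, ENNReal.ofReal (Real.exp (-t * rwS X n ω)) ∂P = (laplace P (X 0) t) ^ n := by
  induction n with
  | zero => simp [rwS]
  | succ n ih =>
    have hφ : Measurable (fun y : ℝ => ENNReal.ofReal (Real.exp (-t * y))) := by fun_prop
    have hind : IndepFun (rwS X n) (X n) P := by
      have := hindep.indepFun_sum_range_succ hmeas n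
      have heq : (∑ j ∈ Finset.range n, X j) = rwS X n := by
        funext ω; rw [Finset.sum_apply]; rfl
      rwa [heq] at this
    have hmul := lintegral_mul_eq_lintegral_mul_lintegral_of_indepFun
      (hφ.comp (rwS_measurable hmeas n)) (hφ.comp (hmeas n)) (hind.comp hφ hφ)
    have hptw : ∀ ω, ENNReal.ofReal (Real.exp (-t * rwS X (n+1) ω))
        = (((fun y => ENNReal.ofReal (Real.exp (-t * y))) ∘ rwS X n) *
          ((fun y => ENNReal.ofReal (Real.exp (-t * y))) ∘ X n)) ω := by
      intro ω
      simp only [Pi.mul_apply, Function.comp_apply]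
      rw [← ENNReal.ofReal_mul (Real.exp_nonneg _), ← Real.exp_add]
      congr 2
      show -t * rwS X (n+1) ω = _
      unfold rwS
      rw [Finset.sum_range_succ]
      ring
    rw [lintegral_congr hptw, hmul]
    have h2 : ∫⁻ ω, ((fun y => ENNReal.ofReal (Real.exp (-t * y))) ∘ rwS X n) ω ∂P
        = laplace P (X 0) t ^ n := ih
    have h3 : ∫⁻ ω, ((fun y => ENNReal.ofReal (Real.exp (-t * y))) ∘ X n) ω ∂P
        = laplace P (X 0) t := lintegral_exp_laplace hmeas hident n
    rw [h2, h3, pow_succ]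

lemma meas_rwS_le_chernoff {t x : ℝ} (ht : 0 ≤ t) {X : ℕ → Ω → ℝ}
    (hmeas : ∀ i, Measurable (X i))
    (hindep : iIndepFun X P)
    (hident : ∀ i, P.map (X i) = P.map (X 0)) (n : ℕ) :
    P {ω | rwS X n ω ≤ x} ≤ ENNReal.ofReal (Real.exp (t * x)) * (laplace P (X 0) t) ^ n := by
  have hset : MeasurableSet {ω | rwS X n ω ≤ x} :=
    measurableSet_le (rwS_measurable hmeas n) measurable_const
  have h1 : P {ω | rwS X n ω ≤ x}
      = ∫⁻ ω, Set.indicator {ω' | rwS X n ω' ≤ x} (fun _ => 1) ω ∂P :=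
    (lintegral_indicator_one' hset).symm
  have hm : Measurable fun ω => ENNReal.ofReal (Real.exp (-t * rwS X n ω)) :=
    (by fun_prop : Measurable (fun y : ℝ => ENNReal.ofReal (Real.exp (-t * y)))).comp
      (rwS_measurable hmeas n)
  rw [h1, ← lintegral_exp_rwS hmeas hindep hident n, ← lintegral_const_mul _ hm]
  refine lintegral_mono (fun ω => ?_)
  by_cases hω : rwS X n ω ≤ x
  · rw [Set.indicator_of_mem (show ω ∈ {ω' | rwS X n ω' ≤ x} from hω),
      ← ENNReal.ofReal_mul (Real.exp_nonneg _), ← Real.exp_add]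
    rw [← ENNReal.ofReal_one]
    refine ENNReal.ofReal_le_ofReal ?_
    rw [← Real.exp_zero]
    apply Real.exp_le_exp.2
    nlinarith
  · rw [Set.indicator_of_notMem (show ω ∉ {ω' | rwS X n ω' ≤ x} from hω)]
    exact zero_le

lemma tendsto_lintegral_exp_atTop {Y : Ω → ℝ} (hY : Measurable Y)
    (hae : ∀ᵐ ω ∂P, 0 ≤ Y ω) :
    Tendsto (fun m : ℕ => ∫⁻ ω, ENNReal.ofReal (Real.exp (-(m : ℝ) * Y ω)) ∂P) atTop
      (𝓝 (P {ω | Y ω = 0})) := by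
  have hset : MeasurableSet {ω | Y ω = 0} := hY (measurableSet_singleton 0)
  have h0 : P {ω | Y ω = 0} = ∫⁻ ω, Set.indicator {ω' | Y ω' = 0} (fun _ => 1) ω ∂P :=
    (lintegral_indicator_one' hset).symm
  rw [h0]
  refine tendsto_lintegral_of_dominated_convergence (fun _ => 1)
    (fun m => by fun_prop) (fun m => hae.mono fun ω hω => ?_) (by simp) ?_
  · rw [← ENNReal.ofReal_one]
    refine ENNReal.ofReal_le_ofReal ?_
    rw [← Real.exp_zero]
    apply Real.exp_le_exp.2
    have : (0:ℝ) ≤ m := Nat.cast_nonneg m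
    nlinarith
  · refine hae.mono fun ω hω => ?_
    rcases eq_or_lt_of_le hω with heq | hpos
    · have : ω ∈ {ω' | Y ω' = 0} := heq.symm
      rw [Set.indicator_of_mem this]
      have : ∀ m : ℕ, ENNReal.ofReal (Real.exp (-(m:ℝ) * Y ω)) = 1 := by
        intro m; rw [← heq]; simp
      simp only [this]
      exact tendsto_const_nhds
    · have hne : ω ∉ {ω' | Y ω' = 0} := fun h => by
        simp only [Set.mem_setOf_eq] at h; linarith
      rw [Set.indicator_of_notMem hne]
      have hreal : Tendsto (fun m : ℕ => Real.exp (-(m:ℝ) * Y ω)) atTop (𝓝 0) := by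
        have : ∀ m : ℕ, Real.exp (-(m:ℝ) * Y ω) = (Real.exp (-(Y ω))) ^ m := by
          intro m
          rw [← Real.exp_nat_mul]
          congr 1; ring
        simp only [this]
        exact tendsto_pow_atTop_nhds_zero_of_lt_one (Real.exp_nonneg _)
          (Real.exp_lt_one_iff.2 (by linarith))
      have := ENNReal.tendsto_ofReal hreal
      simpa using this

lemma laplace_ge {Y : Ω → ℝ} (hY : Measurable Y) (t : ℝ) :
    P {ω | Y ω = 0} ≤ laplace P Y t := by
  have hset : MeasurableSet {ω | Y ω = 0} := hY (measurableSet_singleton 0)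
  rw [← lintegral_indicator_one' hset]
  refine lintegral_mono (fun ω => ?_)
  by_cases hω : Y ω = 0
  · rw [Set.indicator_of_mem (show ω ∈ {ω' | Y ω' = 0} from hω), hω]
    simp
  · rw [Set.indicator_of_notMem (show ω ∉ {ω' | Y ω' = 0} from hω)]
    exact zero_le

lemma meas_rwS_zero_ge {X : ℕ → Ω → ℝ} (hmeas : ∀ i, Measurable (X i))
    (hindep : iIndepFun X P)
    (hident : ∀ i, P.map (X i) = P.map (X 0))
    (hae : ∀ᵐ ω ∂P, ∀ i, 0 ≤ X i ω) (n : ℕ) :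
    (P {ω | X 0 ω = 0}) ^ n ≤ P {ω | rwS X n ω = 0} := by
  have haeS : ∀ᵐ ω ∂P, 0 ≤ rwS X n ω :=
    hae.mono fun ω hω => Finset.sum_nonneg (fun i _ => hω i)
  have htd := tendsto_lintegral_exp_atTop (P := P) (rwS_measurable hmeas n) haeS
  refine ge_of_tendsto htd (Filter.Eventually.of_forall fun m => ?_)
  rw [lintegral_exp_rwS hmeas hindep hident n]
  exact pow_le_pow_left' (laplace_ge (hmeas 0) _) n

lemma expMoment_lt_top {a : ℝ} (ha : 0 < a) {X : ℕ → Ω → ℝ}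
    (hmeas : ∀ i, Measurable (X i))
    (hindep : iIndepFun X P)
    (hident : ∀ i, P.map (X i) = P.map (X 0))
    (hae : ∀ᵐ ω ∂P, ∀ i, 0 ≤ X i ω)
    (hlt : (P {ω | X 0 ω = 0}).toReal < Real.exp (-a)) {x : ℝ} (hx : 0 ≤ x) :
    expMoment P a (numVisits X x) < ⊤ := by
  set βR := (P {ω | X 0 ω = 0}).toReal with hβR
  set r := (βR + Real.exp (-a)) / 2 with hr
  have hβ0 : 0 ≤ βR := ENNReal.toReal_nonneg
  have hr1 : βR < r := by rw [hr]; linarith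
  have hr2 : r < Real.exp (-a) := by rw [hr]; linarith
  have hr0 : 0 < r := lt_of_le_of_lt hβ0 hr1
  have hblt : P {ω | X 0 ω = 0} < ENNReal.ofReal r := by
    rw [← ENNReal.ofReal_toReal (measure_ne_top P _)]
    exact (ENNReal.ofReal_lt_ofReal_iff hr0).2 hr1
  have haeX0 : ∀ᵐ ω ∂P, 0 ≤ X 0 ω := hae.mono fun ω hω => hω 0
  have htd := tendsto_lintegral_exp_atTop (P := P) (hmeas 0) haeX0
  obtain ⟨m, hm⟩ := (htd.eventually_lt_const hblt).exists
  have hφr : laplace P (X 0) (m : ℝ) ≤ ENNReal.ofReal r := le_of_lt hm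
  rw [expMoment_numVisits_eq ha x hmeas hae]
  set q := ENNReal.ofReal (Real.exp a * r) with hq
  have hq1 : q < 1 := by
    rw [hq]
    apply ENNReal.ofReal_lt_one.2
    have h1 : Real.exp a * Real.exp (-a) = 1 := by rw [← Real.exp_add]; simp
    nlinarith [Real.exp_pos a]
  set C := ENNReal.ofReal (Real.exp ((m : ℝ) * x)) with hC
  have hterm : ∀ n : ℕ,
      ENNReal.ofReal (Real.exp (a * (n + 1)) - Real.exp (a * n)) * P {ω | rwS X (n + 1) ω ≤ x}
      ≤ C * q ^ (n + 1) := by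
    intro n
    calc ENNReal.ofReal (Real.exp (a * (n + 1)) - Real.exp (a * n)) * P {ω | rwS X (n+1) ω ≤ x}
        ≤ ENNReal.ofReal (Real.exp (a * ((n:ℝ) + 1))) * (C * (ENNReal.ofReal r) ^ (n + 1)) := by
          refine mul_le_mul' (ENNReal.ofReal_le_ofReal
            (by linarith [Real.exp_pos (a * (n : ℝ))])) ?_
          refine (meas_rwS_le_chernoff (t := (m : ℝ)) (Nat.cast_nonneg m) hmeas hindep
            hident (n + 1)).trans ?_
          exact mul_le_mul_right (pow_le_pow_left' hφr _) _
      _ = C * q ^ (n + 1) := by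
          rw [show a * ((n : ℝ) + 1) = ((n + 1 : ℕ) : ℝ) * a by push_cast; ring,
            Real.exp_nat_mul, ENNReal.ofReal_pow (Real.exp_nonneg a), hq,
            ENNReal.ofReal_mul (Real.exp_nonneg a), mul_pow]
          ring
  have hsum : (∑' n : ℕ, ENNReal.ofReal (Real.exp (a * (n + 1)) - Real.exp (a * n)) *
      P {ω | rwS X (n + 1) ω ≤ x}) ≤ C * (1 - q)⁻¹ := by
    calc _ ≤ ∑' n : ℕ, C * q ^ (n + 1) := ENNReal.tsum_le_tsum hterm
      _ = C * ∑' n : ℕ, q ^ (n + 1) := ENNReal.tsum_mul_left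
      _ ≤ C * ∑' n : ℕ, q ^ n := by
          refine mul_le_mul_right (ENNReal.tsum_le_tsum fun n => ?_) _
          exact pow_le_pow_right_of_le_one' hq1.le (Nat.le_succ n)
      _ = C * (1 - q)⁻¹ := by rw [ENNReal.tsum_geometric]
  have hfin : C * (1 - q)⁻¹ < ⊤ :=
    ENNReal.mul_lt_top ENNReal.ofReal_lt_top (ENNReal.inv_lt_top.2 (tsub_pos_of_lt hq1))
  exact lt_of_le_of_lt (add_le_add_right hsum 1)
    (ENNReal.add_lt_top.2 ⟨ENNReal.one_lt_top, hfin⟩)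

lemma expMoment_eq_top {a : ℝ} (ha : 0 < a) {X : ℕ → Ω → ℝ}
    (hmeas : ∀ i, Measurable (X i))
    (hindep : iIndepFun X P)
    (hident : ∀ i, P.map (X i) = P.map (X 0))
    (hae : ∀ᵐ ω ∂P, ∀ i, 0 ≤ X i ω)
    (hge : Real.exp (-a) ≤ (P {ω | X 0 ω = 0}).toReal) {x : ℝ} (hx : 0 ≤ x) :
    expMoment P a (numVisits X x) = ⊤ := by
  set βR := (P {ω | X 0 ω = 0}).toReal with hβR
  have hβ0 : 0 ≤ βR := ENNReal.toReal_nonneg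
  have hea1 : Real.exp (-a) < 1 := Real.exp_lt_one_iff.2 (by linarith)
  rw [expMoment_numVisits_eq ha x hmeas hae]
  suffices h : (∑' n : ℕ, ENNReal.ofReal (Real.exp (a * (n + 1)) - Real.exp (a * n)) *
      P {ω | rwS X (n + 1) ω ≤ x}) = ⊤ by rw [h]; simp
  rw [eq_top_iff]
  calc (⊤ : ℝ≥0∞) = ∑' _ : ℕ, ENNReal.ofReal (1 - Real.exp (-a)) :=
        (ENNReal.tsum_const_eq_top_of_ne_zero (by
          simp only [ne_eq, ENNReal.ofReal_eq_zero, not_le, sub_pos]; exact hea1)).symm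
    _ ≤ _ := by
        refine ENNReal.tsum_le_tsum fun n => ?_
        have h1 : Real.exp (-a) * Real.exp a = 1 := by rw [← Real.exp_add]; simp
    -- real inequality
        have h2 : (1:ℝ) ≤ (Real.exp a * βR) ^ (n + 1) := by
          apply one_le_pow₀
          calc (1:ℝ) = Real.exp a * Real.exp (-a) := by rw [← Real.exp_add]; simp
          _ ≤ Real.exp a * βR := by nlinarith [Real.exp_pos a]
        have h3 : Real.exp (a * ((n:ℝ) + 1)) - Real.exp (a * (n:ℝ))
            = (1 - Real.exp (-a)) * (Real.exp a) ^ (n + 1) := by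
          rw [show a * ((n : ℝ) + 1) = ((n + 1 : ℕ) : ℝ) * a by push_cast; ring,
            Real.exp_nat_mul,
            show a * (n : ℝ) = ((n + 1 : ℕ) : ℝ) * a + (-a) by push_cast; ring,
            Real.exp_add, Real.exp_nat_mul]
          ring
        have hreal : 1 - Real.exp (-a)
            ≤ (Real.exp (a * ((n:ℝ) + 1)) - Real.exp (a * (n:ℝ))) * βR ^ (n + 1) := by
          rw [h3]
          calc 1 - Real.exp (-a) = (1 - Real.exp (-a)) * 1 := by ring
          _ ≤ (1 - Real.exp (-a)) * ((Real.exp a * βR) ^ (n + 1)) := by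
              apply mul_le_mul_of_nonneg_left h2 (by linarith)
          _ = (1 - Real.exp (-a)) * (Real.exp a) ^ (n + 1) * βR ^ (n + 1) := by
              rw [mul_pow]; ring
        have hP : (ENNReal.ofReal βR) ^ (n + 1) ≤ P {ω | rwS X (n + 1) ω ≤ x} := by
          rw [hβR, ENNReal.ofReal_toReal (measure_ne_top P _)]
          refine (meas_rwS_zero_ge hmeas hindep hident hae (n + 1)).trans (measure_mono ?_)
          intro ω hω
          simp only [Set.mem_setOf_eq] at hω ⊢
          rw [hω]; exact hx
        calc ENNReal.ofReal (1 - Real.exp (-a))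
            ≤ ENNReal.ofReal ((Real.exp (a * ((n:ℝ) + 1)) - Real.exp (a * (n:ℝ)))
                * βR ^ (n + 1)) := ENNReal.ofReal_le_ofReal hreal
          _ = ENNReal.ofReal (Real.exp (a * ((n:ℝ) + 1)) - Real.exp (a * (n:ℝ)))
                * ENNReal.ofReal (βR ^ (n + 1)) := by
              rw [ENNReal.ofReal_mul (by
                have : Real.exp (a * (n:ℝ)) ≤ Real.exp (a * ((n:ℝ)+1)) :=
                  Real.exp_le_exp.2 (by nlinarith)
                linarith)]
          _ = ENNReal.ofReal (Real.exp (a * ((n:ℝ) + 1)) - Real.exp (a * (n:ℝ)))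
                * (ENNReal.ofReal βR) ^ (n + 1) := by rw [ENNReal.ofReal_pow hβ0]
          _ ≤ _ := mul_le_mul_right hP _


end AuxLemmas

theorem exp_moment_numVisits_nonneg_increments
    {Ω : Type*} [MeasurableSpace Ω] (P : Measure Ω) [IsProbabilityMeasure P]
    (X : ℕ → Ω → ℝ) (hmeas : ∀ i, Measurable (X i))
    (hindep : iIndepFun X P)
    (hident : ∀ i, P.map (X i) = P.map (X 0))
    (hnonneg : P {ω | 0 ≤ X 0 ω} = 1)
    (hβlt : P {ω | X 0 ω = 0} < 1)
    (a : ℝ) (ha : 0 < a) :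
    ((∃ x ≥ (0:ℝ), expMoment P a (numVisits X x) < ⊤) ↔
      ((P {ω | X 0 ω = 0}).toReal = 0 ∨ a < -Real.log (P {ω | X 0 ω = 0}).toReal)) ∧
    ((∀ x ≥ (0:ℝ), expMoment P a (numVisits X x) < ⊤) ↔
      ((P {ω | X 0 ω = 0}).toReal = 0 ∨ a < -Real.log (P {ω | X 0 ω = 0}).toReal)) := by
  have haes : ∀ᵐ ω ∂P, ∀ i, 0 ≤ X i ω := by
    rw [ae_all_iff]
    intro i
    have hms : MeasurableSet {ω | 0 ≤ X i ω} := measurableSet_le measurable_const (hmeas i)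
    have h2 : P {ω | 0 ≤ X i ω} = 1 := by
      have h1 : {ω | 0 ≤ X i ω} = (X i) ⁻¹' (Set.Ici 0) := rfl
      rw [h1, ← Measure.map_apply (hmeas i) measurableSet_Ici, hident i,
        Measure.map_apply (hmeas 0) measurableSet_Ici]
      exact hnonneg
    have h3 := (prob_compl_eq_zero_iff hms).2 h2
    rw [ae_iff]
    exact h3
  set βR := (P {ω | X 0 ω = 0}).toReal with hβR
  have hβ0 : 0 ≤ βR := ENNReal.toReal_nonneg
  have hC : (βR = 0 ∨ a < -Real.log βR) ↔ βR < Real.exp (-a) := by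
    constructor
    · rintro (h | h)
      · rw [h]; exact Real.exp_pos _
      · rcases eq_or_lt_of_le hβ0 with h0 | hpos
        · rw [← h0]; exact Real.exp_pos _
        · have hlog : Real.log βR < -a := by linarith
          calc βR = Real.exp (Real.log βR) := (Real.exp_log hpos).symm
          _ < Real.exp (-a) := Real.exp_lt_exp.2 hlog
    · intro h
      rcases eq_or_lt_of_le hβ0 with h0 | hpos
      · exact Or.inl h0.symm
      · right
        have hlog := Real.log_lt_log hpos h
        rw [Real.log_exp] at hlog
        linarith
  rcases lt_or_ge βR (Real.exp (-a)) with hlt | hge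
  · have hfin : ∀ x ≥ (0:ℝ), expMoment P a (numVisits X x) < ⊤ :=
      fun x hx => expMoment_lt_top ha hmeas hindep hident haes hlt hx
    exact ⟨iff_of_true ⟨0, le_refl 0, hfin 0 (le_refl 0)⟩ (hC.2 hlt),
      iff_of_true hfin (hC.2 hlt)⟩
  · have htop : ∀ x ≥ (0:ℝ), expMoment P a (numVisits X x) = ⊤ :=
      fun x hx => expMoment_eq_top ha hmeas hindep hident haes hge hx
    have hnC : ¬ (βR = 0 ∨ a < -Real.log βR) := fun hc => absurd (hC.1 hc) (not_lt.2 hge)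
    refine ⟨iff_of_false ?_ hnC, iff_of_false ?_ hnC⟩
    · rintro ⟨x, hx, hfin⟩
      rw [htop x hx] at hfin
      exact absurd hfin (lt_irrefl ⊤)
    · intro h
      have := h 0 (le_refl 0)
      rw [htop 0 (le_refl 0)] at this
      exact absurd this (lt_irrefl ⊤)
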